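/- For every positive integer m and every real number R, one has ∑_{(k₁,…,k_m) ∈ Δ(m)} (k!/(k₁!·k₂!⋯k_m!)) · R^k = R·(1+R)^{m−1}, where k := k₁ + ⋯ + k_m. -/

import Mathlib

open Polynomial Finset

lemma coeff_A_eq (m : ℕ) (hm : 0 < m) (R : ℝ) :
    (∑ k ∈ range (m+1), (C R * ∑ i ∈ range m, (X:ℝ[X])^(i+1))^k).coeff m
      = R * (1 + R) ^ (m - 1) := by
  set G : ℝ[X] := ∑ i ∈ range m, (X:ℝ[X])^i with hG
  set S : ℝ[X] := ∑ i ∈ range m, (X:ℝ[X])^(i+1) with hSdef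
  have hS : S = X * G := by
    rw [hSdef, hG, Finset.mul_sum]
    exact Finset.sum_congr rfl fun i _ => by ring
  set A : ℝ[X] := ∑ k ∈ range (m+1), (C R * S)^k with hA
  set B : ℝ[X] := ∑ j ∈ range (m+1), ((1 + C R) * X)^j with hB
  have h1 : (1 - C R * S) * A = 1 - (C R * S)^(m+1) := by
    have := geom_sum_mul (C R * S) (m+1)
    linear_combination -this
  have h3 : (1 - (1 + C R) * X) * B = 1 - ((1 + C R) * X)^(m+1) := by
    have := geom_sum_mul ((1 + C R) * X) (m+1)
    linear_combination -this
  have h4 : (1 - X) * G = 1 - X^m := by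
    have := geom_sum_mul (X : ℝ[X]) m
    linear_combination -this
  have hSpow : S^(m+1) = X^(m+1) * G^(m+1) := by rw [hS, mul_pow]
  have hu : ((1 + C R) * X)^m = (1 + C R)^m * (X:ℝ[X])^m := mul_pow _ _ _
  have hE : (1 - (1 + C R) * X) * (A - (1 - X) * B)
      = X^(m+1) * (-(1-X)*(C R * G)^(m+1) - C R * A + (1-X) * (1 + C R)^(m+1)) := by
    linear_combination (1-X) * h1 - (1-X) * h3 + (C R * X * A) * h4
      + (C R * (1-X) * A) * hS - ((1-X) * (C R)^(m+1)) * hSpow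
      + ((1 + C R) * X * (1-X)) * hu
  have hndvd : ¬ (X : ℝ[X]) ∣ (1 - (1 + C R) * X) := by
    rw [Polynomial.X_dvd_iff]
    simp
  have hdvd : (X : ℝ[X])^(m+1) ∣ (A - (1 - X) * B) :=
    Polynomial.prime_X.pow_dvd_of_dvd_mul_left _ hndvd ⟨_, hE⟩
  have hco : (A - (1 - X) * B).coeff m = 0 :=
    Polynomial.X_pow_dvd_iff.1 hdvd m (Nat.lt_succ_self m)
  have hAB : A.coeff m = ((1 - X) * B).coeff m := by
    have h := hco
    rw [Polynomial.coeff_sub, sub_eq_zero] at h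
    exact h
  -- compute coeff of B
  have hBc : ∀ n : ℕ, B.coeff n = if n ≤ m then (1+R)^n else 0 := by
    intro n
    rw [hB, Polynomial.finset_sum_coeff]
    have : ∀ j ∈ range (m+1), (((1 + C R) * X)^j).coeff n
        = if n = j then (1+R)^j else 0 := by
      intro j _
      rw [mul_pow, ← Polynomial.C_1, ← Polynomial.C_add, ← Polynomial.C_pow,
        Polynomial.coeff_C_mul, Polynomial.coeff_X_pow]
      split_ifs <;> simp
    rw [Finset.sum_congr rfl this, Finset.sum_ite_eq (range (m+1)) n]
    simp [Nat.lt_succ_iff]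
  have hfin : A.coeff m = (1+R)^m - (1+R)^(m-1) := by
    rw [hAB, sub_mul, one_mul, Polynomial.coeff_sub]
    obtain ⟨m', rfl⟩ : ∃ m', m = m' + 1 := ⟨m - 1, (Nat.succ_pred_eq_of_pos hm).symm⟩
    rw [Polynomial.coeff_X_mul, hBc, hBc]
    simp
  rw [hfin]
  obtain ⟨m', rfl⟩ : ∃ m', m = m' + 1 := ⟨m - 1, (Nat.succ_pred_eq_of_pos hm).symm⟩
  simp [pow_succ]
  ring

lemma coeff_A_eq_sum (m : ℕ) (R : ℝ) :
    (∑ k ∈ range (m+1), (C R * ∑ i ∈ range m, (X:ℝ[X])^(i+1))^k).coeff m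
    = ∑ p ∈ (range (m+1)).sigma (fun k => (Finset.piAntidiag (range m) k).filter
          (fun g => ∑ i ∈ range m, (i+1) * g i = m)),
        (Nat.multinomial (range m) p.2 : ℝ) * R ^ p.1 := by
  classical
  rw [Finset.sum_sigma]
  rw [Polynomial.finset_sum_coeff]
  refine Finset.sum_congr rfl fun k _ => ?_
  rw [mul_pow, ← Polynomial.C_pow, Polynomial.coeff_C_mul,
    Finset.sum_pow_eq_sum_piAntidiag (range m) (fun i => (X:ℝ[X])^(i+1)) k]
  rw [Polynomial.finset_sum_coeff]
  have hterm : ∀ g ∈ Finset.piAntidiag (range m) k,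
      ((Nat.multinomial (range m) g : ℝ[X]) * ∏ i ∈ range m, ((X:ℝ[X])^(i+1))^(g i)).coeff m
      = if (∑ i ∈ range m, (i+1) * g i = m) then (Nat.multinomial (range m) g : ℝ) else 0 := by
    intro g _
    have : ∏ i ∈ range m, ((X:ℝ[X])^(i+1))^(g i) = X ^ (∑ i ∈ range m, (i+1) * g i) := by
      rw [← Finset.prod_pow_eq_pow_sum]
      exact Finset.prod_congr rfl fun i _ => by rw [← pow_mul]
    rw [this, ← map_natCast (C : ℝ →+* ℝ[X]), Polynomial.coeff_C_mul,
      Polynomial.coeff_X_pow]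
    split_ifs with h1 h2 h2
    · rw [mul_one]
    · exact absurd h1.symm h2
    · exact absurd h2.symm h1
    · rw [mul_zero]
  rw [Finset.sum_congr rfl hterm, ← Finset.sum_filter, Finset.mul_sum]
  refine Finset.sum_congr rfl fun g _ => ?_
  rw [mul_comm]

/-- Lemma 3.3 ("lema_sominha_maluca"):
For every positive integer `m` and every real `R`,
`∑_{(k₁,…,k_m) ∈ Δ(m)} (k!/(k₁!⋯k_m!)) R^k = R(1+R)^{m-1}`, where `k = k₁ + ⋯ + k_m`
and `Δ(m) = {k ∈ ℕ₀^m : k₁ + 2k₂ + ⋯ + m·k_m = m}`. -/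
theorem stmt_1 (m : ℕ) (hm : 0 < m) (R : ℝ) :
    ∑ᶠ kv : {kv : Fin m → ℕ // ∑ ℓ : Fin m, (ℓ.1 + 1) * kv ℓ = m},
      ((Nat.factorial (∑ ℓ : Fin m, kv.1 ℓ) : ℝ) /
        ∏ ℓ : Fin m, (Nat.factorial (kv.1 ℓ) : ℝ)) * R ^ (∑ ℓ : Fin m, kv.1 ℓ)
    = R * (1 + R) ^ (m - 1) := by
  classical
  have hconv1 : ∀ g : ℕ → ℕ, ∑ ℓ : Fin m, (ℓ.1 + 1) * g ℓ.1 = ∑ i ∈ range m, (i+1) * g i :=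
    fun g => Fin.sum_univ_eq_sum_range (fun i => (i+1) * g i) m
  have hconv2 : ∀ g : ℕ → ℕ, ∑ ℓ : Fin m, g ℓ.1 = ∑ i ∈ range m, g i :=
    fun g => Fin.sum_univ_eq_sum_range g m
  have hbound : ∀ (kv : Fin m → ℕ), (∑ ℓ : Fin m, (ℓ.1 + 1) * kv ℓ = m) →
      ∀ ℓ, kv ℓ ≤ m := by
    intro kv h ℓ
    calc kv ℓ ≤ (ℓ.1 + 1) * kv ℓ := Nat.le_mul_of_pos_left _ (Nat.succ_pos _)
    _ ≤ ∑ ℓ : Fin m, (ℓ.1 + 1) * kv ℓ :=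
        Finset.single_le_sum (f := fun i : Fin m => (i.1 + 1) * kv i)
          (fun i _ => Nat.zero_le _) (Finset.mem_univ ℓ)
    _ = m := h
  haveI hfin : Finite {kv : Fin m → ℕ // ∑ ℓ : Fin m, (ℓ.1 + 1) * kv ℓ = m} := by
    refine Finite.of_injective
      (fun kv => (fun ℓ => (⟨kv.1 ℓ, Nat.lt_succ_of_le (hbound kv.1 kv.2 ℓ)⟩ : Fin (m+1)))) ?_
    intro a b hab
    ext ℓ
    exact congrArg Fin.val (congrFun hab ℓ)
  haveI : Fintype {kv : Fin m → ℕ // ∑ ℓ : Fin m, (ℓ.1 + 1) * kv ℓ = m} := Fintype.ofFinite _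
  have hsum : ∑ p ∈ (range (m+1)).sigma (fun k => (Finset.piAntidiag (range m) k).filter
          (fun g => ∑ i ∈ range m, (i+1) * g i = m)),
        (Nat.multinomial (range m) p.2 : ℝ) * R ^ p.1
      = ∑ kv : {kv : Fin m → ℕ // ∑ ℓ : Fin m, (ℓ.1 + 1) * kv ℓ = m},
        ((Nat.factorial (∑ ℓ : Fin m, kv.1 ℓ) : ℝ) /
          ∏ ℓ : Fin m, (Nat.factorial (kv.1 ℓ) : ℝ)) * R ^ (∑ ℓ : Fin m, kv.1 ℓ) := by
    refine Finset.sum_bij'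
      (i := fun p hp => (⟨fun ℓ => p.2 ℓ.1, by
        rw [hconv1]
        exact (Finset.mem_filter.1 (Finset.mem_sigma.1 hp).2).2⟩ :
          {kv : Fin m → ℕ // ∑ ℓ : Fin m, (ℓ.1 + 1) * kv ℓ = m}))
      (j := fun kv _ => ⟨∑ ℓ : Fin m, kv.1 ℓ, fun n => if h : n < m then kv.1 ⟨n, h⟩ else 0⟩)
      (fun p hp => Finset.mem_univ _) ?_ ?_ ?_ ?_
    · -- j maps into sigma set
      intro kv _
      rw [Finset.mem_sigma, Finset.mem_filter, Finset.mem_piAntidiag]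
      have e0 : ∑ ℓ : Fin m, (if h : (ℓ.1 : ℕ) < m then kv.1 ⟨ℓ.1, h⟩ else 0)
          = ∑ ℓ : Fin m, kv.1 ℓ :=
        Finset.sum_congr rfl fun ℓ _ => by rw [dif_pos ℓ.2]
      have e1 : ∑ i ∈ range m, (fun n => if h : n < m then kv.1 ⟨n, h⟩ else 0) i
          = ∑ ℓ : Fin m, kv.1 ℓ := by
        rw [← hconv2 (fun n => if h : n < m then kv.1 ⟨n, h⟩ else 0)]
        exact e0
      have e0' : ∑ ℓ : Fin m, (ℓ.1 + 1) * (if h : (ℓ.1 : ℕ) < m then kv.1 ⟨ℓ.1, h⟩ else 0)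
          = ∑ ℓ : Fin m, (ℓ.1 + 1) * kv.1 ℓ :=
        Finset.sum_congr rfl fun ℓ _ => by rw [dif_pos ℓ.2]
      have e2 : ∑ i ∈ range m, (i+1) * (fun n => if h : n < m then kv.1 ⟨n, h⟩ else 0) i = m := by
        rw [← hconv1 (fun n => if h : n < m then kv.1 ⟨n, h⟩ else 0)]
        rw [e0']
        exact kv.2
      refine ⟨?_, ⟨e1, ?_⟩, e2⟩
      · refine Finset.mem_range.2 (Nat.lt_succ_of_le ?_)
        calc ∑ ℓ : Fin m, kv.1 ℓ ≤ ∑ ℓ : Fin m, (ℓ.1 + 1) * kv.1 ℓ :=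
            Finset.sum_le_sum fun ℓ _ => Nat.le_mul_of_pos_left _ (Nat.succ_pos _)
        _ = m := kv.2
      · intro i hi
        rw [Finset.mem_range]
        by_contra hlt
        exact hi (dif_neg hlt)
    · -- left inverse : j (i p) = p
      intro p hp
      obtain ⟨hp1, hp2⟩ := Finset.mem_sigma.1 hp
      obtain ⟨hpa, _⟩ := Finset.mem_filter.1 hp2
      rw [Finset.mem_piAntidiag] at hpa
      refine Sigma.ext ?_ ?_
      · simpa [hconv2] using hpa.1
      · refine heq_of_eq (funext fun n => ?_)
        dsimp only
        by_cases h : n < m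
        · simp [h]
        · rw [dif_neg h]
          by_contra hne
          have := hpa.2 n (fun hz => hne hz.symm)
          rw [Finset.mem_range] at this
          exact h this
    · -- right inverse : i (j kv) = kv
      intro kv _
      ext ℓ
      simp [ℓ.2]
    · -- values agree
      intro p hp
      obtain ⟨hp1, hp2⟩ := Finset.mem_sigma.1 hp
      obtain ⟨hpa, _⟩ := Finset.mem_filter.1 hp2
      rw [Finset.mem_piAntidiag] at hpa
      have hk : ∑ ℓ : Fin m, p.2 ℓ.1 = p.1 := by rw [hconv2]; exact hpa.1
      have hprod : ∏ ℓ : Fin m, (Nat.factorial (p.2 ℓ.1) : ℝ)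
          = ∏ i ∈ range m, (Nat.factorial (p.2 i) : ℝ) :=
        Fin.prod_univ_eq_prod_range (fun i => (Nat.factorial (p.2 i) : ℝ)) m
      have hspec := Nat.multinomial_spec (range m) p.2
      have hne : (∏ ℓ : Fin m, (Nat.factorial (p.2 ℓ.1) : ℝ)) ≠ 0 := by
        rw [hprod]
        refine Finset.prod_ne_zero_iff.2 fun i _ => ?_
        exact_mod_cast (Nat.factorial_pos _).ne'
      have h2 : Nat.multinomial (range m) p.2 * ∏ i ∈ range m, Nat.factorial (p.2 i)
          = Nat.factorial (∑ i ∈ range m, p.2 i) := by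
        rw [mul_comm]; exact hspec
      have hcast : (Nat.multinomial (range m) p.2 : ℝ)
          = (Nat.factorial (∑ ℓ : Fin m, p.2 ℓ.1) : ℝ)
            / ∏ ℓ : Fin m, (Nat.factorial (p.2 ℓ.1) : ℝ) := by
        rw [eq_div_iff hne, hprod, hconv2 p.2]
        exact_mod_cast h2
      rw [hcast, hk]
  rw [finsum_eq_sum_of_fintype, ← hsum, ← coeff_A_eq_sum m R, coeff_A_eq m hm R]
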